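/- Let α be a continuous action of a locally compact abelian group G on a Hausdorff uniform space (X, 𝒰), and assume the uniformity 𝒰 is G-invariant. Then for each x ∈ X the action α is equicontinuous on the orbit closure H_x = closure of {α(t,x) : t ∈ G}: for every entourage U ∈ 𝒰 there exist an open set O ⊆ G containing 0 and an entourage V ∈ 𝒰 such that for all t ∈ O and all y, z ∈ H_x with (y,z) ∈ V one has (α(t,y), z) ∈ U; in particular, (α(t,y), y) ∈ U for all t ∈ O and all y ∈ H_x. -/

import Mathlib

open Uniformity

/-- If `α` is a continuous action of a locally compact abelian group `G` on a
Hausdorff uniform space `(X, 𝒰)` and `𝒰` is `G`-invariant, then `α` is equicontinuous on each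
orbit closure `H_x = closure {α t x : t ∈ G}`. -/
theorem stmt2 {G X : Type*}
    [AddCommGroup G] [TopologicalSpace G] [IsTopologicalAddGroup G]
    [LocallyCompactSpace G] [T2Space G]
    [UniformSpace X] [T2Space X]
    (α : G → X → X)
    (hzero : ∀ x, α 0 x = x)
    (hadd : ∀ s t x, α s (α t x) = α (s + t) x)
    (hcont : Continuous fun p : G × X => α p.1 p.2)
    (hinv : ∀ U ∈ 𝓤 X, ∃ U' ∈ 𝓤 X, ∀ (t : G), ∀ p : X × X, p ∈ U' →
      (α t p.1, α t p.2) ∈ U)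
    (x : X) :
    ∀ U ∈ 𝓤 X, ∃ O : Set G, IsOpen O ∧ (0 : G) ∈ O ∧ ∃ V ∈ 𝓤 X,
      (∀ t ∈ O, ∀ y ∈ closure (Set.range fun s : G => α s x),
        ∀ z ∈ closure (Set.range fun s : G => α s x),
          (y, z) ∈ V → (α t y, z) ∈ U) ∧
      (∀ t ∈ O, ∀ y ∈ closure (Set.range fun s : G => α s x), (α t y, y) ∈ U) := by
  intro U hU
  -- entourages with W ○ W ⊆ W1 and W1 ○ W1 ⊆ U
  obtain ⟨W1, hW1, hW1U⟩ := comp_mem_uniformity_sets hU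
  obtain ⟨W, hW, hWW1⟩ := comp_mem_uniformity_sets hW1
  -- invariance entourage for W
  obtain ⟨U', hU', hU'W⟩ := hinv W hW
  set V₁ := SetRel.symmetrize (U' ∩ W) with hV₁def
  have hV₁ : V₁ ∈ 𝓤 X := symmetrize_mem_uniformity (Filter.inter_mem hU' hW)
  have hV₁sym : V₁.IsSymm := SetRel.isSymm_symmetrize
  have hV₁U' : V₁ ⊆ U' := SetRel.symmetrize_subset_self.trans Set.inter_subset_left
  have hV₁W : V₁ ⊆ W := SetRel.symmetrize_subset_self.trans Set.inter_subset_right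
  -- open neighborhood of 0 in G
  have hcont0 : Continuous fun t : G => α t x :=
    hcont.comp (continuous_id.prodMk continuous_const)
  have hmem : {t : G | (α t x, x) ∈ V₁} ∈ nhds (0 : G) := by
    have h1 : {y : X | (y, x) ∈ V₁} ∈ nhds x := mem_nhds_right x hV₁
    have h2 : (fun t : G => α t x) ⁻¹' {y : X | (y, x) ∈ V₁} ∈ nhds (0 : G) := by
      apply hcont0.continuousAt.preimage_mem_nhds
      rwa [hzero]
    exact h2
  have key : ∀ t ∈ interior {t : G | (α t x, x) ∈ V₁},
      ∀ y ∈ closure (Set.range fun s : G => α s x),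
      ∀ z ∈ closure (Set.range fun s : G => α s x),
        (y, z) ∈ V₁ → (α t y, z) ∈ U := by
    intro t ht y hy z _ hyz
    have htx : (α t x, x) ∈ V₁ := interior_subset (s := {t : G | (α t x, x) ∈ V₁}) ht
    -- approximate y by an orbit point
    obtain ⟨y', hy'mem, s, hs⟩ :
        ∃ y', (y, y') ∈ V₁ ∧ ∃ s : G, α s x = y' := by
      have hball : UniformSpace.ball y V₁ ∈ nhds y := UniformSpace.ball_mem_nhds y hV₁
      obtain ⟨y', hy'1, hy'2⟩ := (mem_closure_iff_nhds.1 hy) _ hball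
      exact ⟨y', hy'1, hy'2⟩
    subst hs
    have a1 : (α t y, α t (α s x)) ∈ W := hU'W t (y, α s x) (hV₁U' hy'mem)
    have a2 : (α t (α s x), α s x) ∈ W := by
      have heq : α t (α s x) = α s (α t x) := by
        rw [hadd, hadd, add_comm]
      rw [heq]
      exact hU'W s (α t x, x) (hV₁U' htx)
    have a3 : (α s x, y) ∈ W := hV₁W ((SetRel.comm (R := V₁)).1 hy'mem)
    have a4 : (y, z) ∈ W := hV₁W hyz
    have b1 : (α t y, α s x) ∈ W1 := hWW1 ⟨_, a1, a2⟩
    have b2 : (α s x, z) ∈ W1 := hWW1 ⟨_, a3, a4⟩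
    exact hW1U ⟨_, b1, b2⟩
  exact ⟨interior {t : G | (α t x, x) ∈ V₁}, isOpen_interior, mem_interior_iff_mem_nhds.2 hmem,
    V₁, hV₁, key, fun t ht y hy => key t ht y hy y hy (refl_mem_uniformity hV₁)⟩
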